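/- Every regular Lindelöf P-space is Alster. -/
import Mathlib


open Set Topology

/-- A filter base on `X`: a nonempty family of subsets of `X`, not containing `∅`,
closed under pairwise intersections. -/
def FilterBaseOn (X : Type*) (F : Set (Set X)) : Prop :=
  F.Nonempty ∧ ∅ ∉ F ∧ ∀ A ∈ F, ∀ B ∈ F, A ∩ B ∈ F

/-- `F` converges to the set `W`: every open set containing `W` contains a member of `F`. -/
def ConvergesTo {X : Type*} [TopologicalSpace X] (F : Set (Set X)) (W : Set X) : Prop :=
  ∀ U : Set X, IsOpen U → W ⊆ U → ∃ A ∈ F, A ⊆ U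

/-- `F` is total: every filter base extending `F` has nonempty adherence
(intersection of the closures of all its members). -/
def TotalFB {X : Type*} [TopologicalSpace X] (F : Set (Set X)) : Prop :=
  ∀ H : Set (Set X), FilterBaseOn X H → F ⊆ H → (⋂ A ∈ H, closure A).Nonempty

/-- `F` is stable under countable intersections: every countable subfamily of `F`
has a member of `F` contained in its intersection. -/
def StableCI {X : Type*} (F : Set (Set X)) : Prop :=
  ∀ S ⊆ F, S.Countable → ∃ H ∈ F, H ⊆ ⋂₀ S

/-- `F` is ω-closed: the intersection of any nonempty countable subfamily of `F` belongs to `F`. -/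
def OmegaClosedFB {X : Type*} (F : Set (Set X)) : Prop :=
  ∀ S ⊆ F, S.Countable → S.Nonempty → ⋂₀ S ∈ F

/-- `F` is δ-stable: every nonempty countable subfamily of `F` has nonempty intersection. -/
def DeltaStableFB {X : Type*} (F : Set (Set X)) : Prop :=
  ∀ S ⊆ F, S.Countable → S.Nonempty → (⋂₀ S).Nonempty

/-- `G_δ(K)`: the family of Gδ subsets (countable intersections of open sets) containing `K`. -/
def GdeltaNbhds {X : Type*} [TopologicalSpace X] (K : Set X) : Set (Set X) :=
  {G | K ⊆ G ∧ IsGδ G}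

/-- `F ∨ G = {F₀ ∩ F₁ : F₀, F₁ ∈ F ∪ G}`. -/
def joinFB {X : Type*} (F G : Set (Set X)) : Set (Set X) :=
  {A | ∃ F₀ ∈ F ∪ G, ∃ F₁ ∈ F ∪ G, A = F₀ ∩ F₁}

/-- `X` is totally Lindelöf: every filter base stable under countable intersections
extends to a total filter base stable under countable intersections. -/
def TotallyLindelofSpace (X : Type*) [TopologicalSpace X] : Prop :=
  ∀ F : Set (Set X), FilterBaseOn X F → StableCI F →
    ∃ H : Set (Set X), FilterBaseOn X H ∧ StableCI H ∧ F ⊆ H ∧ TotalFB H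

/-- `X` is Alster: every cover of `X` by Gδ sets such that every compact subset of `X`
is contained in a single member admits a countable subcover. -/
def AlsterSpace (X : Type*) [TopologicalSpace X] : Prop :=
  ∀ 𝒢 : Set (Set X), (∀ G ∈ 𝒢, IsGδ G) → (∀ K : Set X, IsCompact K → ∃ G ∈ 𝒢, K ⊆ G) →
    ∃ 𝒞 ⊆ 𝒢, 𝒞.Countable ∧ ⋃₀ 𝒞 = Set.univ

/-- `D` is a discrete subset: each of its points has an open neighborhood meeting `D`
only in that point. -/
def IsDiscreteSubset {X : Type*} [TopologicalSpace X] (D : Set X) : Prop :=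
  ∀ a ∈ D, ∃ U : Set X, IsOpen U ∧ U ∩ D = {a}

/-- The first uncountable ordinal ω₁. -/
noncomputable def omega1 : Ordinal := (Cardinal.aleph 1).ord

theorem stmt18 (X : Type*) [TopologicalSpace X] [RegularSpace X] [LindelofSpace X]
    (hP : ∀ U : ℕ → Set X, (∀ n, IsOpen (U n)) → IsOpen (⋂ n, U n)) :
    AlsterSpace X := by
  intro 𝒢 hGδ hcomp
  have hopen : ∀ G ∈ 𝒢, IsOpen G := by
    intro G hG
    obtain ⟨T, hTo, hTc, rfl⟩ := hGδ G hG
    rcases T.eq_empty_or_nonempty with rfl | hne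
    · simp
    · obtain ⟨f, hf⟩ := hTc.exists_eq_range hne
      subst hf
      rw [Set.sInter_range]
      exact hP f fun n => hTo _ ⟨n, rfl⟩
  have hcov : Set.univ ⊆ ⋃₀ 𝒢 := by
    intro x _
    obtain ⟨G, hG, hxG⟩ := hcomp {x} isCompact_singleton
    exact ⟨G, hG, hxG rfl⟩
  rw [Set.sUnion_eq_biUnion] at hcov
  obtain ⟨C, hC𝒢, hCc, hCcov⟩ := isLindelof_univ.elim_countable_subcover_image
    (fun G hG => hopen G hG) hcov
  refine ⟨C, hC𝒢, hCc, ?_⟩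
  rw [Set.sUnion_eq_biUnion]
  exact Set.eq_univ_of_univ_subset hCcov
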